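/- One step of variable elimination preserves the maximum: if E is the set of functions in fs whose scope contains variable l, E' the rest, and e(x) = max_{y ∈ D_l} Σ_{f ∈ E} f(x[l ↦ y]), then max over all full states x of Σ_{f ∈ fs} f(x) equals max over full states of (e(x) + Σ_{f ∈ E'} f(x)). -/

import Mathlib

open BigOperators

lemma sum_map_filter_split {α : Type*} (L : List α) (p : α → Prop) [DecidablePred p]
    (g : α → ℝ) :
    (L.map g).sum = ((L.filter (fun a => p a)).map g).sum
      + ((L.filter (fun a => ¬ p a)).map g).sum := by
  induction L with
  | nil => simp
  | cons a t ih =>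
    by_cases h : p a <;> simp [List.filter_cons, h, ih] <;> ring

/-- one step of variable elimination preserves the maximum.
`fs` is a list of scoped functions (function paired with its scope), `l` is the variable
being eliminated, `E` collects the functions whose scope contains `l`, `E'` the rest, and
`e x = ⨆ y ∈ D l, ∑ f ∈ E, f (x[l ↦ y])`. -/
theorem elim_step_preserves_max {n : ℕ} (D : Fin n → Type*)
    [∀ i, Fintype (D i)] [∀ i, Nonempty (D i)]
    (fs : List ((((i : Fin n) → D i) → ℝ) × Finset (Fin n)))
    (l : Fin n)
    (hscope : ∀ f ∈ fs, ∀ x y : (i : Fin n) → D i,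
      (∀ j ∈ f.2, x j = y j) → f.1 x = f.1 y) :
    (⨆ x : (i : Fin n) → D i, ((fs.map (fun f => f.1 x)).sum)) =
    (⨆ x : (i : Fin n) → D i,
      ((⨆ y : D l, (((fs.filter (fun f => l ∈ f.2)).map
          (fun f => f.1 (Function.update x l y))).sum)) +
        (((fs.filter (fun f => l ∉ f.2)).map (fun f => f.1 x)).sum))) := by
  have hsplit : ∀ x : (i : Fin n) → D i,
      (fs.map (fun f => f.1 x)).sum
        = ((fs.filter (fun f => l ∈ f.2)).map (fun f => f.1 x)).sum
          + ((fs.filter (fun f => l ∉ f.2)).map (fun f => f.1 x)).sum :=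
    fun x => sum_map_filter_split fs (fun f => l ∈ f.2) _
  have key1 : ∀ (x : (i : Fin n) → D i) (y : D l),
      ((fs.filter (fun f => l ∉ f.2)).map (fun f => f.1 (Function.update x l y))).sum
        = ((fs.filter (fun f => l ∉ f.2)).map (fun f => f.1 x)).sum := by
    intro x y
    congr 1
    apply List.map_congr_left
    intro f hf
    have hf2 := List.mem_filter.mp hf
    have hls : l ∉ f.2 := by simpa using hf2.2
    apply hscope f hf2.1
    intro j hj
    apply Function.update_of_ne
    intro hjl; exact hls (hjl ▸ hj)
  apply le_antisymm
  · apply ciSup_le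
    intro x
    rw [hsplit x]
    have h1 : ((fs.filter (fun f => l ∈ f.2)).map (fun f => f.1 x)).sum
        ≤ ⨆ y : D l, ((fs.filter (fun f => l ∈ f.2)).map
          (fun f => f.1 (Function.update x l y))).sum := by
      have h2 := le_ciSup (f := fun y : D l =>
          ((fs.filter (fun f => l ∈ f.2)).map (fun f => f.1 (Function.update x l y))).sum)
        (Set.finite_range _).bddAbove (x l)
      simpa [Function.update_eq_self] using h2
    calc _ ≤ _ := add_le_add h1 le_rfl
    _ ≤ _ := le_ciSup (f := fun x : (i : Fin n) → D i =>
        (⨆ y : D l, ((fs.filter (fun f => l ∈ f.2)).map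
          (fun f => f.1 (Function.update x l y))).sum) +
        ((fs.filter (fun f => l ∉ f.2)).map (fun f => f.1 x)).sum)
      (Set.finite_range _).bddAbove x
  · apply ciSup_le
    intro x
    set g := fun y : D l =>
      ((fs.filter (fun f => l ∈ f.2)).map (fun f => f.1 (Function.update x l y))).sum with hg
    obtain ⟨y₀, hy₀⟩ := Finite.exists_max g
    have hsup : (⨆ y : D l, g y) = g y₀ :=
      le_antisymm (ciSup_le hy₀) (le_ciSup (Set.finite_range g).bddAbove y₀)
    rw [hsup]
    have heq : g y₀ + ((fs.filter (fun f => l ∉ f.2)).map (fun f => f.1 x)).sum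
        = (fs.map (fun f => f.1 (Function.update x l y₀))).sum := by
      rw [hsplit (Function.update x l y₀), key1 x y₀]
    rw [heq]
    exact le_ciSup (f := fun x : (i : Fin n) → D i => (fs.map (fun f => f.1 x)).sum)
      (Set.finite_range _).bddAbove _
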